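/- Let A ∈ GL_n(ℂ) with AᵀA diagonal. Fix a selection of v rows and v columns; let A_(v) and A^(v) be the corresponding complementary square submatrices, and let Ā_(v) (resp. Ā^(v)) be the n×v (resp. n×(n−v)) submatrix of A on the selected v (resp. complementary n−v) columns. Then the rows of A_(v) form a ℤ-basis for the ℤ-span of the rows of Ā_(v) if and only if the rows of A^(v) form a ℤ-basis for the ℤ-span of the rows of Ā^(v). -/

import Mathlib

open Matrix

private lemma span_eq_iff_aux {M : Type*} [AddCommGroup M] {n v w : ℕ}
    (f : Fin n → M) (sel : Fin v → Fin n) (cmp : Fin w → Fin n)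
    (hcover : ∀ r : Fin n, (∃ a, sel a = r) ∨ (∃ b, cmp b = r)) :
    (Submodule.span ℤ (Set.range fun a => f (sel a)) = Submodule.span ℤ (Set.range f)) ↔
      ∀ b, f (cmp b) ∈ Submodule.span ℤ (Set.range fun a => f (sel a)) := by
  constructor
  · intro h b; rw [h]; exact Submodule.subset_span ⟨cmp b, rfl⟩
  · intro h
    apply le_antisymm
    · exact Submodule.span_mono (by rintro _ ⟨a, rfl⟩; exact ⟨sel a, rfl⟩)
    · rw [Submodule.span_le]
      rintro _ ⟨r, rfl⟩
      rcases hcover r with ⟨a, rfl⟩ | ⟨b, rfl⟩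
      · exact Submodule.subset_span ⟨a, rfl⟩
      · exact h b


private lemma key_step {v w : ℕ}
    (B : Matrix (Fin v) (Fin v) ℂ) (C : Matrix (Fin v) (Fin w) ℂ)
    (D : Matrix (Fin w) (Fin v) ℂ) (E : Matrix (Fin w) (Fin w) ℂ)
    (horth : Bᵀ * C + Dᵀ * E = 0)
    (h1 : ∀ y : Fin v → ℂ, B *ᵥ y = 0 → D *ᵥ y = 0 → y = 0)
    (h2 : ∀ y : Fin w → ℂ, C *ᵥ y = 0 → E *ᵥ y = 0 → y = 0)
    (hspan : ∀ b, D b ∈ Submodule.span ℤ (Set.range fun a => B a)) :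
    (LinearIndependent ℤ fun b => E b) ∧
      ∀ a, C a ∈ Submodule.span ℤ (Set.range fun b => E b) := by
  -- extract the integer matrix M with D = M * B
  choose m hm using fun b => (Submodule.mem_span_range_iff_exists_fun ℤ).mp (hspan b)
  set Mc : Matrix (Fin w) (Fin v) ℂ := fun b a => (m b a : ℂ) with hMc
  have hD : D = Mc * B := by
    ext b c
    rw [mul_apply, ← congrFun (hm b) c, Finset.sum_apply]
    simp [Mc, zsmul_eq_mul]
  -- B is invertible
  have hB : IsUnit B.det := by
    rw [isUnit_iff_ne_zero]
    intro h0
    obtain ⟨y, hy, hBy⟩ := (Matrix.exists_mulVec_eq_zero_iff).mpr h0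
    exact hy (h1 y hBy (by rw [hD, ← mulVec_mulVec, hBy, mulVec_zero]))
  -- C = -Mᵀ * E
  have hBT : IsUnit Bᵀ.det := by rwa [det_transpose]
  have hC : C = -(Mcᵀ * E) := by
    have hmul : Bᵀ * C = Bᵀ * (-(Mcᵀ * E)) := by
      have h' := congrArg (· - Dᵀ * E) horth
      simp only [add_sub_cancel_right, zero_sub] at h'
      rw [h', hD, transpose_mul, Matrix.mul_assoc, Matrix.mul_neg]
    calc C = Bᵀ⁻¹ * (Bᵀ * C) := (nonsing_inv_mul_cancel_left _ _ hBT).symm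
    _ = Bᵀ⁻¹ * (Bᵀ * (-(Mcᵀ * E))) := by rw [hmul]
    _ = -(Mcᵀ * E) := nonsing_inv_mul_cancel_left _ _ hBT
  -- E is invertible
  have hE : IsUnit E.det := by
    rw [isUnit_iff_ne_zero]
    intro h0
    obtain ⟨y, hy, hEy⟩ := (Matrix.exists_mulVec_eq_zero_iff).mpr h0
    exact hy (h2 y (by rw [hC, neg_mulVec, ← mulVec_mulVec, hEy, mulVec_zero, neg_zero]) hEy)
  constructor
  · have hEC : LinearIndependent ℂ fun b => E b :=
      linearIndependent_rows_iff_isUnit.mpr ((Matrix.isUnit_iff_isUnit_det E).mpr hE)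
    exact hEC.restrict_scalars (by intro a b h; simpa using h)
  · intro a
    rw [Submodule.mem_span_range_iff_exists_fun ℤ]
    refine ⟨fun b => -(m b a), ?_⟩
    ext c
    rw [Finset.sum_apply] at *
    simp only [Pi.smul_apply, zsmul_eq_mul, Int.cast_neg, hC]
    simp only [Matrix.neg_apply, mul_apply, transpose_apply, Mc]
    rw [← Finset.sum_neg_distrib]
    exact Finset.sum_congr rfl fun b _ => by
      change _ = -((m b a : ℂ) * E b c); ring


/-- **Theorem 2.4.** Let `A ∈ GL_n(ℂ)` with `Aᵀ A` diagonal.  Select `v` rows and `v` columns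
(via orderings `i, k` of the rows and columns, the selected ones being the first `v`); let
`A_(v)` and `A^(v)` be the corresponding complementary square submatrices, and let `Ā_(v)`
(resp. `Ā^(v)`) be the `n × v` (resp. `n × (n-v)`) submatrix of `A` on the selected
(resp. complementary) columns.  Then the rows of `A_(v)` form a ℤ-basis for the ℤ-span of the
rows of `Ā_(v)` if and only if the rows of `A^(v)` form a ℤ-basis for the ℤ-span of the rows
of `Ā^(v)`. -/
theorem basic_set_duality (n v : ℕ) (hv : v ≤ n)
    (A : Matrix (Fin n) (Fin n) ℂ) (hA : IsUnit A.det)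
    (z : Fin n → ℂ) (hdiag : Aᵀ * A = Matrix.diagonal z)
    (i k : Equiv.Perm (Fin n))
    -- the rows of `Ā_(v)` (all rows of `A`, restricted to the selected columns)
    (barSel : Fin n → Fin v → ℂ)
    (hbarSel : barSel = fun r c => A r (k (Fin.castLE hv c)))
    -- the rows of `Ā^(v)` (all rows of `A`, restricted to the complementary columns)
    (barComp : Fin n → Fin (n - v) → ℂ)
    (hbarComp : barComp = fun r c => A r (k ⟨v + c.1, by omega⟩)) :
    -- rows of `A_(v)` are a basic set for the rows of `Ā_(v)` …
    ((LinearIndependent ℤ fun a : Fin v => barSel (i (Fin.castLE hv a))) ∧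
      Submodule.span ℤ (Set.range fun a : Fin v => barSel (i (Fin.castLE hv a))) =
        Submodule.span ℤ (Set.range barSel)) ↔
    -- … iff rows of `A^(v)` are a basic set for the rows of `Ā^(v)`
    ((LinearIndependent ℤ fun a : Fin (n - v) => barComp (i ⟨v + a.1, by omega⟩)) ∧
      Submodule.span ℤ (Set.range fun a : Fin (n - v) => barComp (i ⟨v + a.1, by omega⟩)) =
        Submodule.span ℤ (Set.range barComp)) := by
  have hvw : v + (n - v) = n := by omega
  let e : Fin v ⊕ Fin (n - v) ≃ Fin n := finSumFinEquiv.trans (finCongr hvw)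
  have he1 : ∀ a : Fin v, e (Sum.inl a) = Fin.castLE hv a := by
    intro a; apply Fin.ext; simp [e]
  have he2 : ∀ b : Fin (n - v), e (Sum.inr b) = (⟨v + b.1, by omega⟩ : Fin n) := by
    intro b; apply Fin.ext; simp [e]
  set B : Matrix (Fin v) (Fin v) ℂ := fun a c => A (i (e (Sum.inl a))) (k (e (Sum.inl c))) with hBdef
  set C : Matrix (Fin v) (Fin (n - v)) ℂ := fun a c => A (i (e (Sum.inl a))) (k (e (Sum.inr c))) with hCdef
  set D : Matrix (Fin (n - v)) (Fin v) ℂ := fun b c => A (i (e (Sum.inr b))) (k (e (Sum.inl c))) with hDdef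
  set E : Matrix (Fin (n - v)) (Fin (n - v)) ℂ := fun b c => A (i (e (Sum.inr b))) (k (e (Sum.inr c))) with hEdef
  -- row identifications
  have hBrow : ∀ a : Fin v, barSel (i (Fin.castLE hv a)) = B a := by
    intro a; funext c; rw [hbarSel, hBdef]; simp only [he1, he2]
  have hDrow : ∀ b : Fin (n - v), barSel (i ⟨v + b.1, by omega⟩) = D b := by
    intro b; funext c; rw [hbarSel, hDdef]; simp only [he1, he2]
  have hCrow : ∀ a : Fin v, barComp (i (Fin.castLE hv a)) = C a := by
    intro a; funext c; rw [hbarComp, hCdef]; simp only [he1, he2]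
  have hErow : ∀ b : Fin (n - v), barComp (i ⟨v + b.1, by omega⟩) = E b := by
    intro b; funext c; rw [hbarComp, hEdef]; simp only [he1, he2]
  -- orthogonality of the two column blocks
  have horth : Bᵀ * C + Dᵀ * E = 0 := by
    ext c c'
    have hsum : ∀ g : Fin n → ℂ, (∑ a : Fin v, g (i (e (Sum.inl a)))) +
        (∑ b : Fin (n - v), g (i (e (Sum.inr b)))) = ∑ j, g j := by
      intro g
      rw [← Fintype.sum_sum_type (fun s => g (i (e s)))]
      exact Equiv.sum_comp (e.trans (i : Equiv (Fin n) (Fin n))) g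
    have hne : k (e (Sum.inl c)) ≠ k (e (Sum.inr c')) := by
      intro h
      exact absurd (e.injective (k.injective h)) (by simp)
    calc (Bᵀ * C + Dᵀ * E) c c'
        = ∑ j, A j (k (e (Sum.inl c))) * A j (k (e (Sum.inr c'))) := by
          rw [Matrix.add_apply, mul_apply, mul_apply,
            ← hsum (fun j => A j (k (e (Sum.inl c))) * A j (k (e (Sum.inr c'))))]
          simp [hBdef, hCdef, hDdef, hEdef]
          rfl
      _ = (Aᵀ * A) (k (e (Sum.inl c))) (k (e (Sum.inr c'))) := by
          rw [mul_apply]; simp [mul_comm]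
      _ = 0 := by rw [hdiag, diagonal_apply_ne _ hne]
  -- the columns of the two stacked blocks are linearly independent
  have hAinj : Function.Injective A.mulVec :=
    mulVec_injective_iff_isUnit.mpr ((Matrix.isUnit_iff_isUnit_det A).mpr hA)
  have h1 : ∀ y : Fin v → ℂ, B *ᵥ y = 0 → D *ᵥ y = 0 → y = 0 := by
    intro y hBy hDy
    set yhat : Fin n → ℂ := fun j => Sum.elim y 0 (e.symm (k.symm j)) with hyhat
    have hy0 : yhat = 0 := by
      apply hAinj
      rw [mulVec_zero]
      funext s
      have : (A *ᵥ yhat) s = ∑ t : Fin v ⊕ Fin (n - v),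
          A s (k (e t)) * yhat (k (e t)) := by
        rw [mulVec, dotProduct]
        exact (Equiv.sum_comp (e.trans (k : Equiv (Fin n) (Fin n)))
          (fun j => A s j * yhat j)).symm
      rw [this]
      have hy : ∀ t, yhat (k (e t)) = Sum.elim y 0 t := by
        intro t; simp [hyhat]
      rw [Fintype.sum_sum_type]
      simp only [hy, Sum.elim_inl, Sum.elim_inr, Pi.zero_apply, mul_zero,
        Finset.sum_const_zero, add_zero]
      rcases hsplit : e.symm (i.symm s) with a | b
      · have hs : s = i (e (Sum.inl a)) := by
          rw [← hsplit, Equiv.apply_symm_apply, Equiv.apply_symm_apply]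
        have := congrFun hBy a
        rw [mulVec, dotProduct] at this
        rw [hs]
        simpa [hBdef] using this
      · have hs : s = i (e (Sum.inr b)) := by
          rw [← hsplit, Equiv.apply_symm_apply, Equiv.apply_symm_apply]
        have := congrFun hDy b
        rw [mulVec, dotProduct] at this
        rw [hs]
        simpa [hDdef] using this
    funext c
    have := congrFun hy0 (k (e (Sum.inl c)))
    simpa [hyhat] using this
  have h2 : ∀ y : Fin (n - v) → ℂ, C *ᵥ y = 0 → E *ᵥ y = 0 → y = 0 := by
    intro y hCy hEy
    set yhat : Fin n → ℂ := fun j => Sum.elim (0 : Fin v → ℂ) y (e.symm (k.symm j)) with hyhat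
    have hy0 : yhat = 0 := by
      apply hAinj
      rw [mulVec_zero]
      funext s
      have : (A *ᵥ yhat) s = ∑ t : Fin v ⊕ Fin (n - v),
          A s (k (e t)) * yhat (k (e t)) := by
        rw [mulVec, dotProduct]
        exact (Equiv.sum_comp (e.trans (k : Equiv (Fin n) (Fin n)))
          (fun j => A s j * yhat j)).symm
      rw [this]
      have hy : ∀ t, yhat (k (e t)) = Sum.elim (0 : Fin v → ℂ) y t := by
        intro t; simp [hyhat]
      rw [Fintype.sum_sum_type]
      simp only [hy, Sum.elim_inl, Sum.elim_inr, Pi.zero_apply, mul_zero,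
        Finset.sum_const_zero, zero_add]
      rcases hsplit : e.symm (i.symm s) with a | b
      · have hs : s = i (e (Sum.inl a)) := by
          rw [← hsplit, Equiv.apply_symm_apply, Equiv.apply_symm_apply]
        have := congrFun hCy a
        rw [mulVec, dotProduct] at this
        rw [hs]
        simpa [hCdef] using this
      · have hs : s = i (e (Sum.inr b)) := by
          rw [← hsplit, Equiv.apply_symm_apply, Equiv.apply_symm_apply]
        have := congrFun hEy b
        rw [mulVec, dotProduct] at this
        rw [hs]
        simpa [hEdef] using this
    funext c
    have := congrFun hy0 (k (e (Sum.inr c)))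
    simpa [hyhat] using this
  -- dual orthogonality and kernel conditions
  have horth' : Eᵀ * D + Cᵀ * B = 0 := by
    have := congrArg Matrix.transpose horth
    rw [transpose_add, transpose_mul, transpose_mul, transpose_transpose,
      transpose_transpose, transpose_zero] at this
    rw [add_comm]
    exact this
  have h1' : ∀ y : Fin (n - v) → ℂ, E *ᵥ y = 0 → C *ᵥ y = 0 → y = 0 :=
    fun y hy hy' => h2 y hy' hy
  have h2' : ∀ y : Fin v → ℂ, D *ᵥ y = 0 → B *ᵥ y = 0 → y = 0 :=
    fun y hy hy' => h1 y hy' hy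
  -- covering of the row indices
  have hcover : ∀ r : Fin n, (∃ a : Fin v, i (Fin.castLE hv a) = r) ∨
      (∃ b : Fin (n - v), i ⟨v + b.1, by omega⟩ = r) := by
    intro r
    rcases hsplit : e.symm (i.symm r) with a | b
    · exact Or.inl ⟨a, by
        rw [← he1 a, ← hsplit, Equiv.apply_symm_apply, Equiv.apply_symm_apply]⟩
    · exact Or.inr ⟨b, by
        rw [← he2 b, ← hsplit, Equiv.apply_symm_apply, Equiv.apply_symm_apply]⟩
  have hcover' : ∀ r : Fin n, (∃ b : Fin (n - v), i ⟨v + b.1, by omega⟩ = r) ∨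
      (∃ a : Fin v, i (Fin.castLE hv a) = r) := fun r => (hcover r).symm
  have hBfun : (fun a : Fin v => barSel (i (Fin.castLE hv a))) = fun a => B a :=
    funext hBrow
  have hEfun : (fun b : Fin (n - v) => barComp (i ⟨v + b.1, by omega⟩)) = fun b => E b :=
    funext hErow
  have hiffSel : (Submodule.span ℤ (Set.range fun a : Fin v => barSel (i (Fin.castLE hv a))) =
        Submodule.span ℤ (Set.range barSel)) ↔
      ∀ b : Fin (n - v), barSel (i ⟨v + b.1, by omega⟩) ∈
        Submodule.span ℤ (Set.range fun a : Fin v => barSel (i (Fin.castLE hv a))) :=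
    span_eq_iff_aux (n := n) (v := v) (w := n - v) barSel (fun a => i (Fin.castLE hv a))
      (fun b : Fin (n - v) => i ⟨v + b.1, by omega⟩) hcover
  have hiffComp : (Submodule.span ℤ
        (Set.range fun b : Fin (n - v) => barComp (i ⟨v + b.1, by omega⟩)) =
        Submodule.span ℤ (Set.range barComp)) ↔
      ∀ a : Fin v, barComp (i (Fin.castLE hv a)) ∈
        Submodule.span ℤ (Set.range fun b : Fin (n - v) => barComp (i ⟨v + b.1, by omega⟩)) :=
    span_eq_iff_aux (n := n) (v := n - v) (w := v) barComp
      (fun b : Fin (n - v) => i ⟨v + b.1, by omega⟩)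
      (fun a : Fin v => i (Fin.castLE hv a)) hcover'
  constructor
  · rintro ⟨_hind, hsp⟩
    have hsp' := hiffSel.mp hsp
    have hspanD : ∀ b, D b ∈ Submodule.span ℤ (Set.range fun a => B a) := by
      intro b
      have h := hsp' b
      rwa [hBfun, hDrow b] at h
    obtain ⟨hindE, hspanC⟩ := key_step B C D E horth h1 h2 hspanD
    refine ⟨by rw [hEfun]; exact hindE, ?_⟩
    refine hiffComp.mpr ?_
    intro a
    rw [hCrow a, hEfun]
    exact hspanC a
  · rintro ⟨_hind, hsp⟩
    have hsp' := hiffComp.mp hsp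
    have hspanC : ∀ a, C a ∈ Submodule.span ℤ (Set.range fun b => E b) := by
      intro a
      have h := hsp' a
      rwa [hEfun, hCrow a] at h
    obtain ⟨hindB, hspanD⟩ := key_step E D C B horth' h1' h2' hspanC
    refine ⟨by rw [hBfun]; exact hindB, ?_⟩
    refine hiffSel.mpr ?_
    intro b
    rw [hDrow b, hBfun]
    exact hspanD b
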